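/- Compact WY representation: let u_i ∈ R^i for i = n-m+1,…,n with m ≤ n-1, each nonzero, and let U ∈ R^{n×m} have j-th column (0_{j-1}; u_{n-j+1}) (zero-padded at the top). Let T = striu(UᵀU) + (1/2) diag(UᵀU), the strictly upper triangular part of UᵀU plus half its diagonal. Then T is invertible and H_n(u_n)·…·H_{n-m+1}(u_{n-m+1}) = I - U T⁻¹ Uᵀ. -/

import Mathlib

open Matrix

/-- The Householder reflection `I - 2 u uᵀ / ‖u‖²`; for `u` supported on the last `k`
coordinates this is the block matrix `H_k(u) = diag(I_{n-k}, I_k - 2 ũ ũᵀ/‖ũ‖²)`. -/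
noncomputable def householder {n : ℕ} (u : Fin n → ℝ) : Matrix (Fin n) (Fin n) ℝ :=
  1 - (2 / ∑ i, u i ^ 2) • vecMulVec u u

/-- `striu A + (1/2) diag A`: the strictly upper triangular part of `A` plus half of its
diagonal part. -/
noncomputable def wyT {m : ℕ} (A : Matrix (Fin m) (Fin m) ℝ) : Matrix (Fin m) (Fin m) ℝ :=
  Matrix.of fun i j => if (i : ℕ) < (j : ℕ) then A i j else if i = j then A i i / 2 else 0

lemma compact_WY_aux {n : ℕ} (m : ℕ) (v : ℕ → (Fin n → ℝ))
    (hv : ∀ j < m, (∑ i, v j i ^ 2) ≠ 0) :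
    IsUnit (wyT ((Matrix.of fun (i : Fin n) (j : Fin m) => v (j : ℕ) i).transpose *
        (Matrix.of fun (i : Fin n) (j : Fin m) => v (j : ℕ) i))) ∧
    (((List.range m).map (fun j => householder (v j))).prod) =
      1 - (Matrix.of fun (i : Fin n) (j : Fin m) => v (j : ℕ) i) *
        (wyT ((Matrix.of fun (i : Fin n) (j : Fin m) => v (j : ℕ) i).transpose *
          (Matrix.of fun (i : Fin n) (j : Fin m) => v (j : ℕ) i)))⁻¹ *
        (Matrix.of fun (i : Fin n) (j : Fin m) => v (j : ℕ) i).transpose := by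
  induction m with
  | zero =>
      constructor
      · have h1 : (wyT ((Matrix.of fun (i : Fin n) (j : Fin 0) => v (j : ℕ) i).transpose *
            (Matrix.of fun (i : Fin n) (j : Fin 0) => v (j : ℕ) i))) = 1 := Subsingleton.elim _ _
        rw [h1]; exact isUnit_one
      · have hz : ((Matrix.of fun (i : Fin n) (j : Fin 0) => v (j : ℕ) i) *
          (wyT ((Matrix.of fun (i : Fin n) (j : Fin 0) => v (j : ℕ) i).transpose *
            (Matrix.of fun (i : Fin n) (j : Fin 0) => v (j : ℕ) i)))⁻¹ *
          (Matrix.of fun (i : Fin n) (j : Fin 0) => v (j : ℕ) i).transpose) = 0 := by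
          ext a b
          simp [Matrix.mul_apply]
        simp [hz]
  | succ m ih =>
      obtain ⟨hTmU, hP⟩ := ih (fun j hj => hv j (hj.trans (Nat.lt_succ_self m)))
      set U' : Matrix (Fin n) (Fin m) ℝ := Matrix.of fun i j => v (j : ℕ) i with hU'
      set w : Fin n → ℝ := v m with hw
      have hs : (∑ i, w i ^ 2) ≠ 0 := hv m (Nat.lt_succ_self m)
      set β : ℝ := 2 / ∑ i, w i ^ 2 with hβ
      set Wc : Matrix (Fin n) (Fin 1) ℝ := Matrix.replicateCol (Fin 1) w with hWc
      set Tm : Matrix (Fin m) (Fin m) ℝ := wyT (U'.transpose * U') with hTm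
      set c : Matrix (Fin m) (Fin 1) ℝ := U'.transpose * Wc with hc
      set e : Fin m ⊕ Fin 1 ≃ Fin (m + 1) := finSumFinEquiv with he
      set U : Matrix (Fin n) (Fin (m+1)) ℝ := Matrix.of fun i j => v (j : ℕ) i with hUdef
      have hU : U = (fromCols U' Wc).submatrix id ⇑e.symm := by
        ext a j
        obtain ⟨k, rfl⟩ := e.surjective j
        rcases k with i | i
        · simp [hUdef, hU', fromCols, he]
        · have h0 : (i : ℕ) = 0 := by omega
          simp [hUdef, hWc, hw, fromCols, he, h0, Matrix.replicateCol]
      have hT : wyT (U.transpose * U)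
          = (fromBlocks Tm c 0 (((∑ i, w i ^ 2)/2) • 1)).submatrix ⇑e.symm ⇑e.symm := by
        ext i j
        obtain ⟨k, rfl⟩ := e.surjective i
        obtain ⟨l, rfl⟩ := e.surjective j
        rcases k with i | i <;> rcases l with j | j
        · have h11 : ∀ (a b : Fin m), (U.transpose * U) (e (Sum.inl a)) (e (Sum.inl b))
              = (U'.transpose * U') a b := by
            intro a b
            simp [Matrix.mul_apply, hUdef, hU', he]
          simp only [wyT, Matrix.submatrix_apply, Equiv.symm_apply_apply, fromBlocks_apply₁₁,
            Matrix.of_apply, hTm]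
          have hca : ((e (Sum.inl i) : Fin (m+1)) : ℕ) = (i : ℕ) := rfl
          have hcb : ((e (Sum.inl j) : Fin (m+1)) : ℕ) = (j : ℕ) := rfl
          rw [hca, hcb]
          rcases Nat.lt_trichotomy (i : ℕ) (j : ℕ) with hlt | heqn | hgt
          · rw [if_pos hlt, h11, if_pos hlt]
          · have hij : i = j := Fin.ext heqn
            subst hij
            rw [if_neg (lt_irrefl ((i : ℕ))),
              if_pos (rfl : (e (Sum.inl i) : Fin (m+1)) = e (Sum.inl i)),
              if_pos (rfl : i = i), h11, if_neg (lt_irrefl ((i : ℕ)))]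
          · rw [if_neg (by omega : ¬ ((i : ℕ) < (j : ℕ))),
              if_neg (show ¬ (e (Sum.inl i) : Fin (m+1)) = e (Sum.inl j) from fun h => by
                have hvv := congrArg Fin.val h
                rw [hca, hcb] at hvv
                omega),
              if_neg (show ¬ i = j from fun h => by
                have hvv := congrArg Fin.val h
                omega),
              if_neg (by omega : ¬ ((i : ℕ) < (j : ℕ)))]
        · have hj0 : (j : ℕ) = 0 := by omega
          simp only [wyT, Matrix.submatrix_apply, Equiv.symm_apply_apply, fromBlocks_apply₁₂,
            Matrix.of_apply]
          have hca : ((e (Sum.inl i) : Fin (m+1)) : ℕ) = (i : ℕ) := rfl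
          have hcb : ((e (Sum.inr j) : Fin (m+1)) : ℕ) = m + (j : ℕ) := rfl
          rw [hca, hcb, if_pos (by omega : (i : ℕ) < m + (j : ℕ))]
          simp [hc, Matrix.mul_apply, hUdef, hU', hWc, hw, hj0, Matrix.replicateCol, he]
        · have hi0 : (i : ℕ) = 0 := by omega
          simp only [wyT, Matrix.submatrix_apply, Equiv.symm_apply_apply, fromBlocks_apply₂₁,
            Matrix.of_apply]
          have hca : ((e (Sum.inr i) : Fin (m+1)) : ℕ) = m + (i : ℕ) := rfl
          have hcb : ((e (Sum.inl j) : Fin (m+1)) : ℕ) = (j : ℕ) := rfl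
          rw [hca, hcb, if_neg (by omega), if_neg (fun h => by
            have hvv := congrArg Fin.val h
            rw [hca, hcb] at hvv
            omega)]
          simp
        · have hi0 : (i : ℕ) = 0 := by omega
          have hj0 : (j : ℕ) = 0 := by omega
          simp only [wyT, Matrix.submatrix_apply, Equiv.symm_apply_apply, fromBlocks_apply₂₂,
            Matrix.of_apply]
          have heq : (e (Sum.inr i) : Fin (m+1)) = e (Sum.inr j) := by
            congr 1
            exact congrArg Sum.inr (Fin.ext (hi0.trans hj0.symm))
          have hca : ((e (Sum.inr i) : Fin (m+1)) : ℕ) = m + (i : ℕ) := rfl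
          rw [if_neg (by rw [hca]; omega), if_pos heq]
          have hsum : (U.transpose * U) (e (Sum.inr i)) (e (Sum.inr i)) = ∑ a, w a ^ 2 := by
            have hval : ((e (Sum.inr i) : Fin (m+1)) : ℕ) = m := by
              rw [hca, hi0]
              omega
            simp [Matrix.mul_apply, hUdef, hw, hval, sq]
          rw [hsum]
          have h1ij : (1 : Matrix (Fin 1) (Fin 1) ℝ) i j = 1 := by
            rw [Subsingleton.elim i j, Matrix.one_apply_eq]
          rw [Matrix.smul_apply, h1ij, smul_eq_mul, mul_one]
      set X : Matrix (Fin (m+1)) (Fin (m+1)) ℝ :=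
        (fromBlocks Tm⁻¹ (-(β • (Tm⁻¹ * c))) 0 (β • 1)).submatrix ⇑e.symm ⇑e.symm with hX
      have hTmdet : IsUnit Tm.det := (Matrix.isUnit_iff_isUnit_det Tm).mp hTmU
      have hTmi : Tm * Tm⁻¹ = 1 := Matrix.mul_nonsing_inv Tm hTmdet
      have hTX : wyT (U.transpose * U) * X = 1 := by
        rw [hT, hX, submatrix_mul_equiv _ _ _ e.symm _, fromBlocks_multiply]
        have b11 : Tm * Tm⁻¹ + c * (0 : Matrix (Fin 1) (Fin m) ℝ) = 1 := by
          rw [Matrix.mul_zero, add_zero, hTmi]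
        have b12 : Tm * (-(β • (Tm⁻¹ * c))) + c * (β • (1 : Matrix (Fin 1) (Fin 1) ℝ)) = 0 := by
          rw [Matrix.mul_neg, Matrix.mul_smul, ← Matrix.mul_assoc, hTmi, Matrix.one_mul,
            Matrix.mul_smul, Matrix.mul_one]
          exact neg_add_cancel _
        have b21 : (0 : Matrix (Fin 1) (Fin m) ℝ) * Tm⁻¹ +
            (((∑ i, w i ^ 2)/2) • (1 : Matrix (Fin 1) (Fin 1) ℝ)) *
              (0 : Matrix (Fin 1) (Fin m) ℝ) = 0 := by simp
        have b22 : (0 : Matrix (Fin 1) (Fin m) ℝ) * (-(β • (Tm⁻¹ * c))) +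
            (((∑ i, w i ^ 2)/2) • (1 : Matrix (Fin 1) (Fin 1) ℝ)) *
              (β • (1 : Matrix (Fin 1) (Fin 1) ℝ)) = 1 := by
          rw [Matrix.zero_mul, zero_add, Matrix.smul_mul, Matrix.mul_smul, Matrix.one_mul,
            smul_smul]
          have : (∑ i, w i ^ 2)/2 * β = 1 := by rw [hβ]; field_simp
          rw [this, one_smul]
        rw [b11, b12, b21, b22, fromBlocks_one, submatrix_one_equiv]
      have hUnit : IsUnit (wyT (U.transpose * U)) :=
        (Matrix.isUnit_iff_isUnit_det _).mpr (Matrix.isUnit_det_of_right_inverse hTX)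
      refine ⟨hUnit, ?_⟩
      have hTinv : (wyT (U.transpose * U))⁻¹ = X := Matrix.inv_eq_right_inv hTX
      rw [List.range_succ, List.map_append, List.prod_append]
      simp only [List.map_cons, List.map_nil, List.prod_cons, List.prod_nil, mul_one]
      rw [hP, hTinv]
      have hH : householder w = 1 - β • (Wc * Wc.transpose) := by
        rw [householder, vecMulVec_eq (Fin 1), hWc, ← hβ, Matrix.transpose_replicateCol]
        rfl
      have hUX : U * X * U.transpose =
          U' * Tm⁻¹ * U'.transpose +
            (U' * (-(β • (Tm⁻¹ * c))) + Wc * (β • (1 : Matrix (Fin 1) (Fin 1) ℝ))) *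
              Wc.transpose := by
        rw [hU, hX, transpose_submatrix, transpose_fromCols]
        rw [submatrix_mul_equiv _ _ _ e.symm _, submatrix_mul_equiv _ _ _ e.symm _,
          Matrix.submatrix_id_id]
        rw [fromCols_mul_fromBlocks, fromCols_mul_fromRows, Matrix.mul_zero, add_zero]
      have key : (U' * (Tm⁻¹ * (U'.transpose * (Wc * Wc.transpose))))
          = U' * (Tm⁻¹ * (c * Wc.transpose)) := by
        rw [hc]
        simp only [Matrix.mul_assoc]
      rw [hH, hUX]
      simp only [Matrix.mul_one, Matrix.one_mul, Matrix.sub_mul, Matrix.mul_sub,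
        Matrix.add_mul, Matrix.neg_mul, Matrix.mul_neg, Matrix.smul_mul, Matrix.mul_smul,
        smul_sub, Matrix.mul_assoc, key]
      abel

/-- compact WY representation: with `U ∈ ℝ^{n×m}` whose `j`-th column is
`u_{n-j+1}` zero-padded on top, and `T = striu(UᵀU) + (1/2)diag(UᵀU)`, the matrix `T` is
invertible and `H_n(u_n) ⋯ H_{n-m+1}(u_{n-m+1}) = I - U T⁻¹ Uᵀ`. -/
theorem compact_WY {n m : ℕ} (hm : m ≤ n - 1)
    (u : ℕ → (Fin n → ℝ))
    (hu : ∀ k, n - m + 1 ≤ k → k ≤ n →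
      (u k ≠ 0 ∧ ∀ i : Fin n, (i : ℕ) < n - k → u k i = 0)) :
    IsUnit (wyT ((Matrix.of fun (i : Fin n) (j : Fin m) => u (n - (j : ℕ)) i).transpose *
        (Matrix.of fun (i : Fin n) (j : Fin m) => u (n - (j : ℕ)) i))) ∧
    (((List.range m).map (fun j => householder (u (n - j)))).prod) =
      1 - (Matrix.of fun (i : Fin n) (j : Fin m) => u (n - (j : ℕ)) i) *
        (wyT ((Matrix.of fun (i : Fin n) (j : Fin m) => u (n - (j : ℕ)) i).transpose *
          (Matrix.of fun (i : Fin n) (j : Fin m) => u (n - (j : ℕ)) i)))⁻¹ *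
        (Matrix.of fun (i : Fin n) (j : Fin m) => u (n - (j : ℕ)) i).transpose := by
  have := compact_WY_aux m (fun j => u (n - j)) (fun j hj => by
    have hn : 1 ≤ n := by omega
    have h1 : n - m + 1 ≤ n - j := by omega
    have h2 : n - j ≤ n := by omega
    have hne := (hu (n - j) h1 h2).1
    intro hzero
    apply hne
    funext i
    have hnn : ∀ a ∈ Finset.univ, (0:ℝ) ≤ u (n - j) a ^ 2 := fun a _ => sq_nonneg _
    have := (Finset.sum_eq_zero_iff_of_nonneg hnn).mp hzero i (Finset.mem_univ i)
    exact pow_eq_zero_iff (by norm_num) |>.mp this)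
  exact this
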